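/- The unique solution φ ∈ 𝓑 of the integral equation (IE) is nonnegative: φ(t,s,i,y) ≥ 0 for every (t,s,i,y) ∈ D̄. -/

import Mathlib

open MeasureTheory Real Filter Set

noncomputable def sumLam {k : ℕ} (lam : Fin k → Fin k → ℝ → ℝ) (i : Fin k) (y : ℝ) : ℝ :=
  ∑ j ∈ Finset.univ.filter (fun j => j ≠ i), lam i j y

noncomputable def Lambda {k : ℕ} (lam : Fin k → Fin k → ℝ → ℝ) (i : Fin k) (y : ℝ) : ℝ :=
  ∫ v in (0:ℝ)..y, sumLam lam i v

noncomputable def Fcdf {k : ℕ} (lam : Fin k → Fin k → ℝ → ℝ) (i : Fin k) (y : ℝ) : ℝ :=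
  1 - Real.exp (-(Lambda lam i y))

noncomputable def fdens {k : ℕ} (lam : Fin k → Fin k → ℝ → ℝ) (i : Fin k) (y : ℝ) : ℝ :=
  sumLam lam i y * Real.exp (-(Lambda lam i y))

noncomputable def pMat {k : ℕ} (lam : Fin k → Fin k → ℝ → ℝ) (i j : Fin k) (y : ℝ) : ℝ :=
  if j = i then (if sumLam lam i y = 0 then 1 else 0)
  else (if sumLam lam i y = 0 then 0 else lam i j y / sumLam lam i y)

noncomputable def sigbar {k : ℕ} (σ : ℝ → Fin k → ℝ) (t : ℝ) (i : Fin k) (v : ℝ) : ℝ :=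
  Real.sqrt (∫ u in t..(t+v), (σ u i)^2)

noncomputable def Lfun {k : ℕ} (r : Fin k → ℝ) (σ : ℝ → Fin k → ℝ)
    (t x s : ℝ) (i : Fin k) (v : ℝ) : ℝ :=
  (Real.log (x / s) - ∫ u in t..(t+v), (r i - (σ u i)^2 / 2)) / sigbar σ t i v

noncomputable def alphaDens {k : ℕ} (r : Fin k → ℝ) (σ : ℝ → Fin k → ℝ)
    (x t s : ℝ) (i : Fin k) (v : ℝ) : ℝ :=
  Real.exp (-(Lfun r σ t x s i v)^2 / 2) / (Real.sqrt (2 * Real.pi) * x * sigbar σ t i v)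

def memDbar (T t s y : ℝ) : Prop :=
  t ∈ Set.Icc 0 T ∧ s ∈ Set.Ici (0:ℝ) ∧ y ∈ Set.Icc 0 t

def memD (T t s y : ℝ) : Prop :=
  t ∈ Set.Ioo 0 T ∧ s ∈ Set.Ioi (0:ℝ) ∧ y ∈ Set.Ioo 0 t

noncomputable def Aop {k : ℕ} (lam : Fin k → Fin k → ℝ → ℝ) (r : Fin k → ℝ)
    (σ : ℝ → Fin k → ℝ) (ρ : Fin k → ℝ → ℝ → ℝ) (T : ℝ)
    (φ : ℝ → ℝ → Fin k → ℝ → ℝ) (t s : ℝ) (i : Fin k) (y : ℝ) : ℝ :=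
  (1 - Fcdf lam i (T - t + y)) / (1 - Fcdf lam i y) * ρ i t s
  + ∫ v in (0:ℝ)..(T - t),
      Real.exp (-(r i * v)) * (fdens lam i (y + v) / (1 - Fcdf lam i y)) *
      ∑ j ∈ Finset.univ.filter (fun j => j ≠ i),
        pMat lam i j (y + v) *
        ∫ x in Set.Ioi (0:ℝ), φ (t + v) x j 0 * alphaDens r σ x t s i v

def memB {k : ℕ} (T : ℝ) (φ : ℝ → ℝ → Fin k → ℝ → ℝ) : Prop :=
  (∀ i : Fin k, ContinuousOn (fun p : ℝ × ℝ × ℝ => φ p.1 p.2.1 i p.2.2)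
      {p : ℝ × ℝ × ℝ | memDbar T p.1 p.2.1 p.2.2}) ∧
  ∃ M : ℝ, ∀ t s y : ℝ, memDbar T t s y → ∀ i : Fin k, |φ t s i y| ≤ M * (1 + s)

noncomputable def normB {k : ℕ} (T : ℝ) (φ : ℝ → ℝ → Fin k → ℝ → ℝ) : ℝ :=
  sSup {a : ℝ | ∃ t s y : ℝ, ∃ i : Fin k, memDbar T t s y ∧ a = |φ t s i y| / (1 + s)}

def isBSMSolution {k : ℕ} (r : Fin k → ℝ) (σ : ℝ → Fin k → ℝ) (K : ℝ → ℝ) (T : ℝ)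
    (ρ : Fin k → ℝ → ℝ → ℝ) : Prop :=
  ∀ i : Fin k,
    ContinuousOn (fun p : ℝ × ℝ => ρ i p.1 p.2) (Set.Icc 0 T ×ˢ Set.Ici 0) ∧
    (∀ t ∈ Set.Icc (0:ℝ) T, ∀ s ∈ Set.Ici (0:ℝ), 0 ≤ ρ i t s) ∧
    (∃ M : ℝ, ∀ t ∈ Set.Icc (0:ℝ) T, ∀ s ∈ Set.Ici (0:ℝ), ρ i t s ≤ M * (1 + s)) ∧
    (∀ t ∈ Set.Ioo (0:ℝ) T, ∀ s ∈ Set.Ioi (0:ℝ),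
      (DifferentiableAt ℝ (fun u => ρ i u s) t ∧
       DifferentiableAt ℝ (fun x => ρ i t x) s ∧
       DifferentiableAt ℝ (deriv (fun x => ρ i t x)) s) ∧
      deriv (fun u => ρ i u s) t + r i * s * deriv (fun x => ρ i t x) s
        + (1/2) * (σ t i)^2 * s^2 * deriv (deriv (fun x => ρ i t x)) s
        = r i * ρ i t s) ∧
    (∀ s ∈ Set.Ici (0:ℝ), ρ i T s = K s)



lemma aux_exp3 {sb : ℝ} (hsb : 0 < sb) (w : ℝ) :
    Real.exp (-(w/sb)^2/2) ≤ Real.exp (2*sb^2 - 2*w) := by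
  apply Real.exp_le_exp.mpr
  have h : ∀ q : ℝ, -(q^2)/2 ≤ 2*sb^2 - 2*(q*sb) := by
    intro q; nlinarith [sq_nonneg (q - 2*sb)]
  have := h (w/sb); rwa [div_mul_cancel₀ _ hsb.ne'] at this

lemma aux_exp1 {sb : ℝ} (hsb : 0 < sb) (w : ℝ) :
    Real.exp (-(w/sb)^2/2) ≤ Real.exp (sb^2/2 + w) := by
  apply Real.exp_le_exp.mpr
  have h : ∀ q : ℝ, -(q^2)/2 ≤ sb^2/2 + q*sb := by
    intro q; nlinarith [sq_nonneg (q + sb)]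
  have := h (w/sb); rwa [div_mul_cancel₀ _ hsb.ne'] at this

lemma aux_exp2 {sb : ℝ} (hsb : 0 < sb) (w : ℝ) :
    Real.exp (-(w/sb)^2/2) ≤ Real.exp (sb^2/2 - w) := by
  apply Real.exp_le_exp.mpr
  have h : ∀ q : ℝ, -(q^2)/2 ≤ sb^2/2 - q*sb := by
    intro q; nlinarith [sq_nonneg (q - sb)]
  have := h (w/sb); rwa [div_mul_cancel₀ _ hsb.ne'] at this

lemma aux_lognormal {sb a : ℝ} (hsb : 0 < sb) :
    IntegrableOn (fun x => (1+x) * (Real.exp (-((Real.log x - a)/sb)^2/2) /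
        (Real.sqrt (2*Real.pi) * x * sb))) (Set.Ioi (0:ℝ)) ∧
    (∫ x in Set.Ioi (0:ℝ), (1+x) * (Real.exp (-((Real.log x - a)/sb)^2/2) /
        (Real.sqrt (2*Real.pi) * x * sb)))
      ≤ 2 * Real.exp (2*sb^2) * (1 + Real.exp a) / (Real.sqrt (2*Real.pi) * sb) := by
  have hπ : 0 < Real.sqrt (2*Real.pi) := Real.sqrt_pos.mpr (by positivity)
  set N : ℝ := Real.sqrt (2*Real.pi) * sb with hN
  have hN0 : 0 < N := by positivity
  set G : ℝ → ℝ := fun x => (1+x) * (Real.exp (-((Real.log x - a)/sb)^2/2) /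
      (Real.sqrt (2*Real.pi) * x * sb)) with hG
  set x₀ : ℝ := Real.exp a with hx₀
  have hx₀0 : 0 < x₀ := Real.exp_pos a
  set Q : ℝ := (1+x₀) * Real.exp (sb^2/2) * Real.exp (-a) / N with hQ
  set R : ℝ := (Real.exp (sb^2/2) * Real.exp a + Real.exp (2*sb^2) * Real.exp (2*a)) / N with hR
  have hlog : ContinuousOn Real.log (Set.Ioi (0:ℝ)) :=
    Real.continuousOn_log.mono (fun x hx => ne_of_gt hx)
  have hGcont : ContinuousOn G (Set.Ioi (0:ℝ)) := by
    apply (continuousOn_const.add continuousOn_id).mul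
    apply ContinuousOn.div
    · exact Real.continuous_exp.comp_continuousOn
        ((((hlog.sub continuousOn_const).div_const sb).pow 2).neg.div_const 2)
    · exact (continuousOn_const.mul continuousOn_id).mul continuousOn_const
    · intro x hx
      have hx' : (0:ℝ) < x := hx
      positivity
  have hGnn : ∀ x ∈ Set.Ioi (0:ℝ), 0 ≤ G x := by
    intro x hx; have hx' : (0:ℝ) < x := hx
    have h2 : (0:ℝ) ≤ Real.exp (-((Real.log x - a)/sb)^2/2) /
        (Real.sqrt (2*Real.pi) * x * sb) := by positivity
    exact mul_nonneg (by linarith) h2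
  have hb1 : ∀ x ∈ Set.Ioc (0:ℝ) x₀, G x ≤ Q := by
    intro x hx
    obtain ⟨hx0, hxle⟩ := hx
    have hE := aux_exp1 hsb (Real.log x - a)
    have hEeq : Real.exp (sb^2/2 + (Real.log x - a))
        = Real.exp (sb^2/2) * x * Real.exp (-a) := by
      rw [show sb^2/2 + (Real.log x - a) = sb^2/2 + Real.log x + (-a) by ring,
        Real.exp_add, Real.exp_add, Real.exp_log hx0]
    calc G x = (1+x) * (Real.exp (-((Real.log x - a)/sb)^2/2) /
          (Real.sqrt (2*Real.pi) * x * sb)) := rfl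
      _ ≤ (1+x₀) * ((Real.exp (sb^2/2) * x * Real.exp (-a)) /
          (Real.sqrt (2*Real.pi) * x * sb)) := by
          apply mul_le_mul (by linarith)
          · apply div_le_div_of_nonneg_right ?_ (by positivity)
            exact hEeq ▸ hE
          · positivity
          · linarith
      _ = Q := by
          rw [hQ, hN]; field_simp
  have hb2 : ∀ x ∈ Set.Ioi x₀, G x ≤ R * x^(-2:ℝ) := by
    intro x hx
    have hx0 : (0:ℝ) < x := lt_trans hx₀0 hx
    have hrp : x^(-2:ℝ) = 1/x^2 := by
      rw [Real.rpow_neg hx0.le, one_div]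
      congr 1
      rw [show (2:ℝ) = ((2:ℕ):ℝ) by norm_num, Real.rpow_natCast]
    have hE2 : Real.exp (-((Real.log x - a)/sb)^2/2)
        ≤ Real.exp (sb^2/2) * Real.exp a / x := by
      have h := aux_exp2 hsb (Real.log x - a)
      have heq : Real.exp (sb^2/2 - (Real.log x - a))
          = Real.exp (sb^2/2) * Real.exp a / x := by
        rw [show sb^2/2 - (Real.log x - a) = sb^2/2 + a + (-(Real.log x)) by ring,
          Real.exp_add, Real.exp_add, Real.exp_neg, Real.exp_log hx0]
        ring
      rw [heq] at h; exact h
    have hE3 : Real.exp (-((Real.log x - a)/sb)^2/2)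
        ≤ Real.exp (2*sb^2) * Real.exp (2*a) / x^2 := by
      have h := aux_exp3 hsb (Real.log x - a)
      have heq : Real.exp (2*sb^2 - 2*(Real.log x - a))
          = Real.exp (2*sb^2) * Real.exp (2*a) / x^2 := by
        rw [show 2*sb^2 - 2*(Real.log x - a) = 2*sb^2 + 2*a + (-(2*Real.log x)) by ring,
          Real.exp_add, Real.exp_add, Real.exp_neg, two_mul (Real.log x), Real.exp_add,
          Real.exp_log hx0]
        ring
      rw [heq] at h; exact h
    calc G x = Real.exp (-((Real.log x - a)/sb)^2/2) / (Real.sqrt (2*Real.pi) * x * sb)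
          + Real.exp (-((Real.log x - a)/sb)^2/2) / (Real.sqrt (2*Real.pi) * sb) := by
          rw [hG]; field_simp
      _ ≤ (Real.exp (sb^2/2) * Real.exp a / x) / (Real.sqrt (2*Real.pi) * x * sb)
          + (Real.exp (2*sb^2) * Real.exp (2*a) / x^2) / (Real.sqrt (2*Real.pi) * sb) := by
          gcongr
      _ = R * (1/x^2) := by rw [hR, hN]; field_simp
      _ = R * x^(-2:ℝ) := by rw [hrp]
  have hGmeas : Measurable G := by
    rw [hG]
    apply (measurable_const.add measurable_id).mul
    apply Measurable.div
    · exact Real.measurable_exp.comp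
        ((((Real.measurable_log.sub measurable_const).div_const sb).pow_const 2).neg.div_const 2)
    · exact (measurable_const.mul measurable_id).mul measurable_const
  have hI1 : IntegrableOn G (Set.Ioc 0 x₀) := by
    apply Measure.integrableOn_of_bounded (M := Q)
    · exact (measure_Ioc_lt_top).ne
    · exact hGmeas.aestronglyMeasurable
    · rw [ae_restrict_iff' measurableSet_Ioc]
      apply ae_of_all
      intro x hx
      rw [Real.norm_eq_abs, abs_of_nonneg (hGnn x (Set.Ioc_subset_Ioi_self hx))]
      exact hb1 x hx
  have hRint : IntegrableOn (fun x => R * x^(-2:ℝ)) (Set.Ioi x₀) :=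
    (integrableOn_Ioi_rpow_of_lt (by norm_num) hx₀0).const_mul R
  have hR0 : 0 ≤ R := by positivity
  have hI2 : IntegrableOn G (Set.Ioi x₀) := by
    apply Integrable.mono hRint hGmeas.aestronglyMeasurable.restrict
    rw [ae_restrict_iff' measurableSet_Ioi]
    apply ae_of_all
    intro x hx
    have hx0 : (0:ℝ) < x := lt_trans hx₀0 hx
    rw [Real.norm_eq_abs, Real.norm_eq_abs, abs_of_nonneg (hGnn x hx0),
      abs_of_nonneg (by positivity : (0:ℝ) ≤ R * x^(-2:ℝ))]
    exact hb2 x hx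
  have hsplit : Set.Ioc (0:ℝ) x₀ ∪ Set.Ioi x₀ = Set.Ioi (0:ℝ) :=
    Set.Ioc_union_Ioi_eq_Ioi hx₀0.le
  have hIG : IntegrableOn G (Set.Ioi (0:ℝ)) := by
    rw [← hsplit]; exact hI1.union hI2
  refine ⟨hIG, ?_⟩
  have hval1 : (∫ x in Set.Ioc (0:ℝ) x₀, G x) ≤ Q * x₀ := by
    have h := setIntegral_mono_on hI1 (integrableOn_const measure_Ioc_lt_top.ne)
      measurableSet_Ioc hb1
    rwa [setIntegral_const, Real.volume_real_Ioc_of_le hx₀0.le, sub_zero,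
      smul_eq_mul, mul_comm] at h
  have hval2 : (∫ x in Set.Ioi x₀, G x) ≤ R * Real.exp (-a) := by
    have h := setIntegral_mono_on hI2 hRint measurableSet_Ioi hb2
    rw [MeasureTheory.integral_const_mul, integral_Ioi_rpow_of_lt (by norm_num) hx₀0] at h
    have heq : -x₀ ^ (-2 + 1 : ℝ) / (-2 + 1) = Real.exp (-a) := by
      norm_num
      rw [Real.rpow_neg_one, hx₀, ← Real.exp_neg]
    rwa [heq] at h
  have hsum : (∫ x in Set.Ioi (0:ℝ), G x) ≤ Q * x₀ + R * Real.exp (-a) := by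
    rw [← hsplit, setIntegral_union (Set.Ioc_disjoint_Ioi le_rfl) measurableSet_Ioi hI1 hI2]
    exact add_le_add hval1 hval2
  refine hsum.trans ?_
  have hAB : Real.exp (sb^2/2) ≤ Real.exp (2*sb^2) := by
    apply Real.exp_le_exp.mpr; nlinarith [sq_nonneg sb]
  have hE0 : 0 < Real.exp a := Real.exp_pos a
  have hA0 : 0 < Real.exp (sb^2/2) := Real.exp_pos _
  have hB0 : 0 < Real.exp (2*sb^2) := Real.exp_pos _
  rw [hQ, hR, hx₀, Real.exp_neg, two_mul a, Real.exp_add]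
  rw [div_mul_eq_mul_div, div_mul_eq_mul_div, ← add_div, div_le_div_iff₀ hN0 hN0]
  set A := Real.exp (sb^2/2)
  set B := Real.exp (2*sb^2)
  set E := Real.exp a
  have h1 : (1+E)*A*E⁻¹*E = (1+E)*A := by
    field_simp
  have h2 : (A*E+B*(E*E))*E⁻¹ = A + B*E := by
    field_simp
  rw [h1, h2]
  nlinarith [hN0, hE0, mul_le_mul_of_nonneg_right hAB hN0.le,
    mul_le_mul_of_nonneg_right (mul_le_mul_of_nonneg_right hAB hE0.le) hN0.le]


lemma aux_inner (φj αf : ℝ → ℝ) (m' C1 : ℝ) (hm : 0 < m') (hC1 : 0 ≤ C1)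
    (hα0 : ∀ x ∈ Set.Ioi (0:ℝ), 0 ≤ αf x)
    (hφ : ∀ x ∈ Set.Ioi (0:ℝ), -φj x ≤ m' * (1+x))
    (hGint : IntegrableOn (fun x => (1+x) * αf x) (Set.Ioi 0))
    (hGval : (∫ x in Set.Ioi (0:ℝ), (1+x) * αf x) ≤ C1) :
    - ∫ x in Set.Ioi (0:ℝ), φj x * αf x ≤ m' * C1 := by
  by_cases hint : IntegrableOn (fun x => φj x * αf x) (Set.Ioi (0:ℝ))
  · rw [← integral_neg]
    calc (∫ x in Set.Ioi (0:ℝ), -(φj x * αf x))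
        ≤ ∫ x in Set.Ioi (0:ℝ), m' * ((1+x) * αf x) := by
          apply setIntegral_mono_on hint.neg (hGint.const_mul m') measurableSet_Ioi
          intro x hx
          simp only [Pi.neg_apply]
          have h1 := hφ x hx
          have h2 := hα0 x hx
          nlinarith [mul_le_mul_of_nonneg_right h1 h2]
      _ = m' * ∫ x in Set.Ioi (0:ℝ), (1+x) * αf x := by
          rw [MeasureTheory.integral_const_mul]
      _ ≤ m' * C1 := mul_le_mul_of_nonneg_left hGval hm.le
  · rw [MeasureTheory.integral_undef hint]
    simpa using mul_nonneg hm.le hC1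

lemma memDbar_mk {T t s y : ℝ} (h1 : 0 ≤ t) (h2 : t ≤ T) (h3 : 0 ≤ s)
    (h4 : 0 ≤ y) (h5 : y ≤ t) : memDbar T t s y := by
  unfold memDbar
  exact ⟨Set.mem_Icc.mpr ⟨h1, h2⟩, h3, Set.mem_Icc.mpr ⟨h4, h5⟩⟩

set_option maxHeartbeats 2000000 in
theorem stmt_9 {k : ℕ} (lam : Fin k → Fin k → ℝ → ℝ)
    (hmeas : ∀ i j : Fin k, i ≠ j → Measurable (lam i j))
    (hnn : ∀ i j : Fin k, i ≠ j → ∀ y : ℝ, 0 < y → 0 ≤ lam i j y)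
    (c : ℝ) (hc : 0 < c)
    (hbound : ∀ i : Fin k, ∀ y : ℝ, 0 < y → sumLam lam i y ≤ c)
    (hinf : ∀ i : Fin k, Tendsto (Lambda lam i) atTop atTop)
    (r : Fin k → ℝ) (hr : ∀ i : Fin k, 0 ≤ r i)
    (σ : ℝ → Fin k → ℝ)
    (hσpos : ∀ u : ℝ, 0 ≤ u → ∀ i : Fin k, 0 < σ u i)
    (hσcont : ∀ i : Fin k, ContinuousOn (fun u => σ u i) (Set.Ici 0))
    (T : ℝ) (hT : 0 < T)
    (K : ℝ → ℝ) (hKcont : ContinuousOn K (Set.Ici 0))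
    (k₁ k₂ : ℝ) (hk₁ : 0 < k₁) (hk₂ : 0 < k₂)
    (hK : ∀ s : ℝ, 0 ≤ s → 0 ≤ K s ∧ K s ≤ k₁ + k₂ * s)
    (ρ : Fin k → ℝ → ℝ → ℝ) (hρ : isBSMSolution r σ K T ρ)
    :
    ∀ φ : ℝ → ℝ → Fin k → ℝ → ℝ,
      memB T φ →
      (∀ t s y : ℝ, memDbar T t s y → ∀ i : Fin k,
        φ t s i y = Aop lam r σ ρ T φ t s i y) →
      ∀ t s y : ℝ, memDbar T t s y → ∀ i : Fin k, 0 ≤ φ t s i y := by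
  intro φ hφB hIE
  rcases Nat.eq_zero_or_pos k with hk0 | hkpos
  · intro t s y _ i
    subst hk0
    exact i.elim0
  have i0 : Fin k := ⟨0, hkpos⟩
  haveI : Nonempty (Fin k) := ⟨i0⟩
  obtain ⟨hφcont, M, hM⟩ := hφB
  -- basic jump-rate facts
  have hsum0 : ∀ (i : Fin k) (z : ℝ), 0 < z → 0 ≤ sumLam lam i z := by
    intro i z hz
    apply Finset.sum_nonneg
    intro j hj
    exact hnn i j (Ne.symm (Finset.mem_filter.mp hj).2) z hz
  have hsummeas : ∀ i : Fin k, Measurable (sumLam lam i) := by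
    intro i
    apply Finset.measurable_sum
    intro j hj
    exact hmeas i j (Ne.symm (Finset.mem_filter.mp hj).2)
  have hsumint : ∀ (i : Fin k) (a b : ℝ), 0 ≤ a → a ≤ b →
      IntervalIntegrable (sumLam lam i) volume a b := by
    intro i a b ha hab
    rw [intervalIntegrable_iff_integrableOn_Ioc_of_le hab]
    apply Measure.integrableOn_of_bounded (M := c)
    · exact measure_Ioc_lt_top.ne
    · exact (hsummeas i).aestronglyMeasurable
    · rw [ae_restrict_iff' measurableSet_Ioc]
      apply ae_of_all
      intro u hu
      have hu0 : 0 < u := lt_of_le_of_lt ha hu.1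
      rw [Real.norm_eq_abs, abs_of_nonneg (hsum0 i u hu0)]
      exact hbound i u hu0
  have hΛmono : ∀ (i : Fin k) (y z : ℝ), 0 ≤ y → y ≤ z →
      Lambda lam i y ≤ Lambda lam i z := by
    intro i y z hy hyz
    have h1 := hsumint i 0 y le_rfl hy
    have h2 := hsumint i y z hy hyz
    have hadd := intervalIntegral.integral_add_adjacent_intervals h1 h2
    have hpos : 0 ≤ ∫ u in y..z, sumLam lam i u := by
      apply intervalIntegral.integral_nonneg_of_ae_restrict hyz
      have hae2 : ∀ᵐ u ∂(volume.restrict (Set.Icc y z)), 0 ≤ sumLam lam i u := by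
        rw [ae_restrict_iff' measurableSet_Icc, ae_iff]
        apply measure_mono_null (t := {(0:ℝ)})
        · intro u hu
          simp only [Set.mem_setOf_eq] at hu
          push_neg at hu
          obtain ⟨hmem, hneg⟩ := hu
          simp only [Set.mem_singleton_iff]
          by_contra hne
          have hu0 : 0 < u := lt_of_le_of_ne (le_trans hy hmem.1) (Ne.symm hne)
          exact absurd (hsum0 i u hu0) (not_le.mpr hneg)
        · exact measure_singleton 0
      exact hae2
    simp only [Lambda] at *
    linarith
  have h1F : ∀ (i : Fin k) (z : ℝ), 1 - Fcdf lam i z = Real.exp (-(Lambda lam i z)) := by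
    intro i z
    simp [Fcdf]
  have hpnn : ∀ (i j : Fin k) (z : ℝ), 0 < z → 0 ≤ pMat lam i j z := by
    intro i j z hz
    unfold pMat
    split_ifs with h1 h2 h3
    · norm_num
    · exact le_rfl
    · exact le_rfl
    · exact div_nonneg (hnn i j (fun h => h1 h.symm) z hz) (hsum0 i z hz)
  have hpsum : ∀ (i : Fin k) (z : ℝ), 0 < z →
      (∑ j ∈ Finset.univ.filter (fun j => j ≠ i), pMat lam i j z) ≤ 1 := by
    intro i z hz
    by_cases h0 : sumLam lam i z = 0
    · rw [Finset.sum_eq_zero]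
      · norm_num
      · intro j hj
        simp [pMat, (Finset.mem_filter.mp hj).2, h0]
    · have heq : (∑ j ∈ Finset.univ.filter (fun j => j ≠ i), pMat lam i j z)
          = (∑ j ∈ Finset.univ.filter (fun j => j ≠ i), lam i j z) / sumLam lam i z := by
        rw [Finset.sum_div]
        apply Finset.sum_congr rfl
        intro j hj
        simp [pMat, (Finset.mem_filter.mp hj).2, h0]
      rw [heq, show (∑ j ∈ Finset.univ.filter (fun j => j ≠ i), lam i j z)
          = sumLam lam i z from rfl, div_self h0]
  -- uniform bounds on σ and r
  have hσmm : ∀ i : Fin k, ∃ lo hi : ℝ, 0 < lo ∧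
      ∀ u ∈ Set.Icc (0:ℝ) T, lo ≤ σ u i ∧ σ u i ≤ hi := by
    intro i
    have hc1 : ContinuousOn (fun u => σ u i) (Set.Icc 0 T) :=
      (hσcont i).mono (fun u hu => hu.1)
    obtain ⟨ulo, hulo, hminu⟩ := isCompact_Icc.exists_isMinOn (Set.nonempty_Icc.mpr hT.le) hc1
    obtain ⟨uhi, huhi, hmaxu⟩ := isCompact_Icc.exists_isMaxOn (Set.nonempty_Icc.mpr hT.le) hc1
    exact ⟨σ ulo i, σ uhi i, hσpos ulo hulo.1 i,
      fun u hu => ⟨isMinOn_iff.mp hminu u hu, isMaxOn_iff.mp hmaxu u hu⟩⟩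
  choose lo hi hlo0 hbnds using hσmm
  set σlo : ℝ := Finset.univ.inf' Finset.univ_nonempty lo with hσlodef
  set σhi : ℝ := Finset.univ.sup' Finset.univ_nonempty hi with hσhidef
  have hσlo0 : 0 < σlo := by
    rw [hσlodef, Finset.lt_inf'_iff]
    exact fun i _ => hlo0 i
  have hσlole : ∀ (i : Fin k) (u : ℝ), u ∈ Set.Icc (0:ℝ) T → σlo ≤ σ u i := by
    intro i u hu
    exact le_trans (Finset.inf'_le lo (Finset.mem_univ i)) (hbnds i u hu).1
  have hσhile : ∀ (i : Fin k) (u : ℝ), u ∈ Set.Icc (0:ℝ) T → σ u i ≤ σhi := by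
    intro i u hu
    exact le_trans (hbnds i u hu).2 (Finset.le_sup' hi (Finset.mem_univ i))
  set rmax : ℝ := Finset.univ.sup' Finset.univ_nonempty r with hrmaxdef
  have hrmaxle : ∀ i : Fin k, r i ≤ rmax := fun i => Finset.le_sup' r (Finset.mem_univ i)
  have hrmax0 : 0 ≤ rmax := le_trans (hr i0) (hrmaxle i0)
  set C : ℝ := 2 * Real.exp (2*(σhi^2*T)) * Real.exp (rmax*T) /
      (Real.sqrt (2*Real.pi) * σlo) with hCdef
  have hπ0 : (0:ℝ) < Real.sqrt (2*Real.pi) := Real.sqrt_pos.mpr (by positivity)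
  have hC0 : 0 < C := by
    rw [hCdef]
    positivity
  set δ : ℝ := (1/(8*c*C))^2 with hδdef
  have hδ0 : 0 < δ := by
    rw [hδdef]
    positivity
  have hsqδ : Real.sqrt δ = 1/(8*c*C) := by
    rw [hδdef]
    exact Real.sqrt_sq (by positivity)
  -- sigma-bar estimates
  have hsig : ∀ (t v : ℝ) (i : Fin k), 0 ≤ t → 0 < v → t + v ≤ T →
      σlo * Real.sqrt v ≤ sigbar σ t i v ∧ (sigbar σ t i v)^2 ≤ σhi^2*T ∧
      (∫ u in t..(t+v), (r i - (σ u i)^2/2)) ≤ rmax * T := by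
    intro t v i ht hv htv
    have htv' : t ≤ t + v := by linarith
    have hsub : Set.uIcc t (t+v) ⊆ Set.Icc 0 T := by
      rw [Set.uIcc_of_le htv']
      intro u hu
      exact ⟨by linarith [hu.1], by linarith [hu.2]⟩
    have hsub' : Set.uIcc t (t+v) ⊆ Set.Ici 0 := fun u hu => (hsub hu).1
    have hcσ : ContinuousOn (fun u => (σ u i)^2) (Set.uIcc t (t+v)) :=
      ((hσcont i).mono hsub').pow 2
    have hint2 : IntervalIntegrable (fun u => (σ u i)^2) volume t (t+v) :=
      hcσ.intervalIntegrable
    have hlow : σlo^2 * v ≤ ∫ u in t..(t+v), (σ u i)^2 := by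
      have h := intervalIntegral.integral_mono_on htv' intervalIntegrable_const hint2
        (f := fun _ => σlo^2) (fun u hu => by
          have hu' : u ∈ Set.Icc (0:ℝ) T := hsub (by rwa [Set.uIcc_of_le htv'])
          exact pow_le_pow_left₀ hσlo0.le (hσlole i u hu') 2)
      rw [intervalIntegral.integral_const, smul_eq_mul] at h
      calc σlo^2 * v = (t + v - t) * σlo^2 := by ring
        _ ≤ _ := h
    have hup : (∫ u in t..(t+v), (σ u i)^2) ≤ σhi^2 * T := by
      have h := intervalIntegral.integral_mono_on htv' hint2 intervalIntegrable_const
        (g := fun _ => σhi^2) (fun u hu => by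
          have hu' : u ∈ Set.Icc (0:ℝ) T := hsub (by rwa [Set.uIcc_of_le htv'])
          exact pow_le_pow_left₀ (hσpos u hu'.1 i).le (hσhile i u hu') 2)
      rw [intervalIntegral.integral_const, smul_eq_mul] at h
      calc (∫ u in t..(t+v), (σ u i)^2) ≤ (t + v - t) * σhi^2 := h
        _ = v * σhi^2 := by ring
        _ ≤ T * σhi^2 := mul_le_mul_of_nonneg_right (by linarith) (sq_nonneg _)
        _ = σhi^2 * T := by ring
    have hint0 : 0 ≤ ∫ u in t..(t+v), (σ u i)^2 := le_trans (by positivity) hlow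
    refine ⟨?_, ?_, ?_⟩
    · have h1 : σlo * Real.sqrt v = Real.sqrt (σlo^2 * v) := by
        rw [Real.sqrt_mul (sq_nonneg σlo), Real.sqrt_sq hσlo0.le]
      rw [h1]
      exact Real.sqrt_le_sqrt hlow
    · have h2 : (sigbar σ t i v)^2 = ∫ u in t..(t+v), (σ u i)^2 :=
        Real.sq_sqrt hint0
      rw [h2]
      exact hup
    · have h := intervalIntegral.integral_mono_on htv'
        (intervalIntegrable_const.sub (hint2.div_const 2)) intervalIntegrable_const
        (g := fun _ => r i) (fun u _ => by show r i - (σ u i)^2/2 ≤ r i; nlinarith [sq_nonneg (σ u i)])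
      rw [intervalIntegral.integral_const, smul_eq_mul] at h
      calc (∫ u in t..(t+v), (r i - (σ u i)^2/2)) ≤ (t + v - t) * r i := h
        _ = v * r i := by ring
        _ ≤ T * rmax := mul_le_mul (by linarith) (hrmaxle i) (hr i) hT.le
        _ = rmax * T := by ring
  -- the contraction step
  have hstep : ∀ τ : ℝ,
      (∀ t s y, memDbar T t s y → τ ≤ t → ∀ i, 0 < s → 0 ≤ φ t s i y) →
      (∀ t s y, memDbar T t s y → τ - δ ≤ t → ∀ i, 0 < s → 0 ≤ φ t s i y) := by
    intro τ hP
    set S : Set ℝ := {a : ℝ | ∃ t s y : ℝ, ∃ i : Fin k,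
      (memDbar T t s y ∧ τ - δ ≤ t ∧ 0 < s) ∧ a = -φ t s i y / (1+s)} with hSdef
    have hbddS : BddAbove S := by
      refine ⟨M, ?_⟩
      rintro a ⟨t, s, y, i, ⟨hmem, _, hs⟩, rfl⟩
      have h1s : (0:ℝ) < 1 + s := by
        have : (0:ℝ) ≤ s := hmem.2.1
        linarith
      rw [div_le_iff₀ h1s]
      calc -φ t s i y ≤ |φ t s i y| := neg_le_abs _
        _ ≤ M * (1+s) := hM t s y hmem i
    set m' : ℝ := sSup S with hm'def
    by_cases hm'pos : m' ≤ 0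
    · intro t s y hmem ht i hs
      have h1s : (0:ℝ) < 1 + s := by linarith
      have hel : -φ t s i y / (1+s) ∈ S := ⟨t, s, y, i, ⟨hmem, ht, hs⟩, rfl⟩
      have h3 := (le_csSup hbddS hel).trans hm'pos
      rw [div_le_iff₀ h1s] at h3
      linarith
    · push_neg at hm'pos
      have hkey : ∀ a ∈ S, a ≤ m'/4 := by
        rintro a ⟨t, s, y, i, ⟨hmem, ht, hs⟩, rfl⟩
        obtain ⟨htI, hsI, hyI⟩ := hmem
        have ht0 : (0:ℝ) ≤ t := htI.1
        have htT : t ≤ T := htI.2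
        have hy0 : (0:ℝ) ≤ y := hyI.1
        have hyt : y ≤ t := hyI.2
        have h1s : (0:ℝ) < 1 + s := by linarith
        rw [div_le_iff₀ h1s]
        have hAop : φ t s i y = (1 - Fcdf lam i (T - t + y)) / (1 - Fcdf lam i y) * ρ i t s
            + ∫ v in (0:ℝ)..(T - t), Real.exp (-(r i * v)) *
              (fdens lam i (y + v) / (1 - Fcdf lam i y)) *
              ∑ j ∈ Finset.univ.filter (fun j => j ≠ i), pMat lam i j (y + v) *
                ∫ x in Set.Ioi (0:ℝ), φ (t + v) x j 0 * alphaDens r σ x t s i v :=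
          hIE t s y ⟨htI, hsI, hyI⟩ i
        set g : ℝ → ℝ := fun v => Real.exp (-(r i * v)) *
            (fdens lam i (y + v) / (1 - Fcdf lam i y)) *
            ∑ j ∈ Finset.univ.filter (fun j => j ≠ i), pMat lam i j (y + v) *
              ∫ x in Set.Ioi (0:ℝ), φ (t + v) x j 0 * alphaDens r σ x t s i v with hgdef
    
        have hterm1 : 0 ≤ (1 - Fcdf lam i (T-t+y)) / (1 - Fcdf lam i y) * ρ i t s := by
          apply mul_nonneg
          · rw [h1F, h1F]
            positivity
          · exact (hρ i).2.1 t htI s hsI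
        set w : ℝ := τ - t with hwdef
        have hwδ : w ≤ δ := by
          rw [hwdef]
          linarith
        set D : ℝ := c * C * (m' * (1+s)) with hDdef
        have hD0 : 0 < D := by
          rw [hDdef]
          have : (0:ℝ) < 1 + s := h1s
          positivity
        set Bf : ℝ → ℝ := Set.indicator (Set.Ioo 0 w) (fun v => D * v^(-(1/2):ℝ)) with hBdef
        have hTt0 : (0:ℝ) ≤ T - t := by linarith
        have hBint : IntervalIntegrable Bf volume 0 (T - t) := by
          have h1 : IntervalIntegrable (fun v : ℝ => D * v^(-(1/2):ℝ)) volume 0 (T-t) :=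
            (intervalIntegral.intervalIntegrable_rpow' (by norm_num)).const_mul D
          rw [intervalIntegrable_iff] at h1 ⊢
          exact h1.indicator measurableSet_Ioo
        have hB0 : ∀ v : ℝ, 0 ≤ Bf v := by
          intro v
          rw [hBdef]
          apply Set.indicator_nonneg
          intro x hx
          exact mul_nonneg hD0.le (Real.rpow_nonneg hx.1.le _)
        have hgB : ∀ v ∈ Set.Icc (0:ℝ) (T-t), -g v ≤ Bf v := by
          intro v hv
          rcases eq_or_lt_of_le hv.1 with hv0 | hv0
          · -- v = 0
            have hsig0 : sigbar σ t i 0 = 0 := by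
              simp [sigbar]
            have hα00 : ∀ x : ℝ, alphaDens r σ x t s i 0 = 0 := by
              intro x
              simp [alphaDens, hsig0]
            have hgz : g 0 = 0 := by
              simp [hgdef, hα00]
            have hBz : Bf 0 = 0 := by
              rw [hBdef]
              apply Set.indicator_of_notMem
              simp
            rw [← hv0, hgz, hBz, neg_zero]
          · -- v > 0
            have hvT : v ≤ T - t := hv.2
            have hyv : 0 < y + v := by linarith
            have hFy : (1:ℝ) - Fcdf lam i y = Real.exp (-(Lambda lam i y)) := h1F i y
            have hfd0 : 0 ≤ fdens lam i (y+v) :=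
              mul_nonneg (hsum0 i _ hyv) (Real.exp_pos _).le
            have hhle : fdens lam i (y+v) / (1 - Fcdf lam i y) ≤ c := by
              rw [hFy, div_le_iff₀ (Real.exp_pos _)]
              calc fdens lam i (y+v)
                  = sumLam lam i (y+v) * Real.exp (-(Lambda lam i (y+v))) := rfl
                _ ≤ c * Real.exp (-(Lambda lam i (y+v))) :=
                    mul_le_mul_of_nonneg_right (hbound i _ hyv) (Real.exp_pos _).le
                _ ≤ c * Real.exp (-(Lambda lam i y)) := by
                    apply mul_le_mul_of_nonneg_left _ hc.le
                    exact Real.exp_le_exp.mpr (neg_le_neg (hΛmono i y (y+v) hy0 (by linarith)))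
            have hh0 : 0 ≤ fdens lam i (y+v) / (1 - Fcdf lam i y) := by
              rw [hFy]
              exact div_nonneg hfd0 (Real.exp_pos _).le
            have hexple : Real.exp (-(r i * v)) ≤ 1 :=
              Real.exp_le_one_iff.mpr
                (by have h8 := mul_nonneg (hr i) hv0.le; linarith only [h8])
            by_cases hvw : v < w
            · -- contraction estimate branch
              have hBfv : Bf v = D * v^(-(1/2):ℝ) := by
                rw [hBdef]
                exact Set.indicator_of_mem (Set.mem_Ioo.mpr ⟨hv0, hvw⟩) _
              obtain ⟨hsblow, hsbup, hμup⟩ := hsig t v i ht0 hv0 (by linarith)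
              have hsb0 : 0 < sigbar σ t i v :=
                lt_of_lt_of_le (mul_pos hσlo0 (Real.sqrt_pos.mpr hv0)) hsblow
              have hv12 : v^(-(1/2):ℝ) = (Real.sqrt v)⁻¹ := by
                rw [Real.rpow_neg hv0.le, Real.sqrt_eq_rpow]
              have hαeq : Set.EqOn
                  (fun x => (1+x) * (Real.exp (-((Real.log x -
                      (Real.log s + ∫ u in t..(t+v), (r i - (σ u i)^2/2)))/(sigbar σ t i v))^2/2) /
                    (Real.sqrt (2*Real.pi) * x * sigbar σ t i v)))
                  (fun x => (1+x) * alphaDens r σ x t s i v) (Set.Ioi 0) := by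
                intro x hx
                have hx0 : (0:ℝ) < x := hx
                have harg : Real.log (x/s) - (∫ u in t..(t+v), (r i - (σ u i)^2/2))
                    = Real.log x - (Real.log s + ∫ u in t..(t+v), (r i - (σ u i)^2/2)) := by
                  rw [Real.log_div (ne_of_gt hx0) (ne_of_gt hs)]
                  ring
                simp only [alphaDens, Lfun]
                rw [harg]
              obtain ⟨hGint0, hGval0⟩ := aux_lognormal
                (sb := sigbar σ t i v)
                (a := Real.log s + ∫ u in t..(t+v), (r i - (σ u i)^2/2)) hsb0
              have hGint : IntegrableOn (fun x => (1+x) * alphaDens r σ x t s i v)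
                  (Set.Ioi (0:ℝ)) :=
                hGint0.congr_fun hαeq measurableSet_Ioi
              have hGval : (∫ x in Set.Ioi (0:ℝ), (1+x) * alphaDens r σ x t s i v)
                  ≤ C * ((1+s) * v^(-(1/2):ℝ)) := by
                rw [← setIntegral_congr_fun measurableSet_Ioi hαeq]
                refine hGval0.trans ?_
                have hE1 : Real.exp (2*(sigbar σ t i v)^2) ≤ Real.exp (2*(σhi^2*T)) :=
                  Real.exp_le_exp.mpr (by linarith)
                have hE2 : Real.exp (Real.log s + ∫ u in t..(t+v), (r i - (σ u i)^2/2))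
                    = s * Real.exp (∫ u in t..(t+v), (r i - (σ u i)^2/2)) := by
                  rw [Real.exp_add, Real.exp_log hs]
                have hE3 : Real.exp (∫ u in t..(t+v), (r i - (σ u i)^2/2))
                    ≤ Real.exp (rmax*T) := Real.exp_le_exp.mpr hμup
                have hrm1 : (1:ℝ) ≤ Real.exp (rmax*T) := by
                  rw [← Real.exp_zero]
                  exact Real.exp_le_exp.mpr (by positivity)
                have hnum : 2 * Real.exp (2*(sigbar σ t i v)^2) *
                    (1 + Real.exp (Real.log s + ∫ u in t..(t+v), (r i - (σ u i)^2/2)))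
                    ≤ 2 * Real.exp (2*(σhi^2*T)) * Real.exp (rmax*T) * (1+s) := by
                  rw [hE2]
                  have h4 : s * Real.exp (∫ u in t..(t+v), (r i - (σ u i)^2/2))
                      ≤ s * Real.exp (rmax*T) := mul_le_mul_of_nonneg_left hE3 hs.le
                  have hEμ0 : (0:ℝ) < Real.exp (∫ u in t..(t+v), (r i - (σ u i)^2/2)) :=
                    Real.exp_pos _
                  have h6 : (0:ℝ) ≤ 1 + s * Real.exp (∫ u in t..(t+v), (r i - (σ u i)^2/2)) := by
                    have h9 := mul_nonneg hs.le hEμ0.le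
                    linarith only [h9]
                  have h7 : 1 + s * Real.exp (∫ u in t..(t+v), (r i - (σ u i)^2/2))
                      ≤ Real.exp (rmax*T) * (1+s) := by
                    have h10 : Real.exp (rmax*T) * (1+s)
                        = Real.exp (rmax*T) + s * Real.exp (rmax*T) := by ring
                    linarith only [h4, hrm1, h10]
                  calc 2 * Real.exp (2*(sigbar σ t i v)^2) *
                      (1 + s * Real.exp (∫ u in t..(t+v), (r i - (σ u i)^2/2)))
                      ≤ 2 * Real.exp (2*(σhi^2*T)) * (Real.exp (rmax*T) * (1+s)) := by
                        apply mul_le_mul (by linarith only [hE1]) h7 h6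
                        positivity
                    _ = 2 * Real.exp (2*(σhi^2*T)) * Real.exp (rmax*T) * (1+s) := by ring
                have hden : Real.sqrt (2*Real.pi) * (σlo * Real.sqrt v)
                    ≤ Real.sqrt (2*Real.pi) * sigbar σ t i v :=
                  mul_le_mul_of_nonneg_left hsblow (Real.sqrt_nonneg _)
                have hden0 : 0 < Real.sqrt (2*Real.pi) * (σlo * Real.sqrt v) :=
                  mul_pos hπ0 (mul_pos hσlo0 (Real.sqrt_pos.mpr hv0))
                have hsv0 : (0:ℝ) < Real.sqrt v := Real.sqrt_pos.mpr hv0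
                calc 2 * Real.exp (2*(sigbar σ t i v)^2) *
                      (1 + Real.exp (Real.log s + ∫ u in t..(t+v), (r i - (σ u i)^2/2))) /
                      (Real.sqrt (2*Real.pi) * sigbar σ t i v)
                    ≤ (2 * Real.exp (2*(σhi^2*T)) * Real.exp (rmax*T) * (1+s)) /
                      (Real.sqrt (2*Real.pi) * (σlo * Real.sqrt v)) :=
                      div_le_div₀ (by positivity) hnum hden0 hden
                  _ = C * ((1+s) * v^(-(1/2):ℝ)) := by
                      rw [hCdef, hv12]
                      field_simp
              have hU0 : 0 ≤ m' * (C * ((1+s) * v^(-(1/2):ℝ))) := by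
                apply mul_nonneg hm'pos.le
                apply mul_nonneg hC0.le
                exact mul_nonneg (by linarith) (Real.rpow_nonneg hv0.le _)
              have hα0 : ∀ x ∈ Set.Ioi (0:ℝ), 0 ≤ alphaDens r σ x t s i v := by
                intro x hx
                have hx0 : (0:ℝ) < x := hx
                apply div_nonneg (Real.exp_pos _).le
                apply mul_nonneg (mul_nonneg hπ0.le hx0.le) hsb0.le
              have hinnerj : ∀ j : Fin k,
                  -(∫ x in Set.Ioi (0:ℝ), φ (t+v) x j 0 * alphaDens r σ x t s i v)
                  ≤ m' * (C * ((1+s) * v^(-(1/2):ℝ))) := by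
                intro j
                apply aux_inner _ _ m' _ hm'pos
                  (by positivity)
                  hα0 _ hGint hGval
                intro x hx
                have hx0 : (0:ℝ) < x := hx
                have hmemx : memDbar T (t+v) x 0 :=
                  memDbar_mk (by linarith) (by linarith) hx0.le le_rfl (by linarith)
                have hel : -φ (t+v) x j 0 / (1+x) ∈ S :=
                  ⟨t+v, x, 0, j, ⟨hmemx, by linarith, hx0⟩, rfl⟩
                have h5 := le_csSup hbddS hel
                rw [div_le_iff₀ (by linarith)] at h5
                exact h5
              have hsum1 : (∑ j ∈ Finset.univ.filter (fun j => j ≠ i),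
                  pMat lam i j (y+v)) ≤ 1 := hpsum i _ hyv
              have hSbound : -(∑ j ∈ Finset.univ.filter (fun j => j ≠ i),
                  pMat lam i j (y+v) *
                  ∫ x in Set.Ioi (0:ℝ), φ (t+v) x j 0 * alphaDens r σ x t s i v)
                  ≤ m' * (C * ((1+s) * v^(-(1/2):ℝ))) := by
                rw [← Finset.sum_neg_distrib]
                calc (∑ j ∈ Finset.univ.filter (fun j => j ≠ i),
                      -(pMat lam i j (y+v) *
                      ∫ x in Set.Ioi (0:ℝ), φ (t+v) x j 0 * alphaDens r σ x t s i v))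
                    ≤ ∑ j ∈ Finset.univ.filter (fun j => j ≠ i),
                      pMat lam i j (y+v) * (m' * (C * ((1+s) * v^(-(1/2):ℝ)))) := by
                      apply Finset.sum_le_sum
                      intro j hj
                      rw [← mul_neg]
                      exact mul_le_mul_of_nonneg_left (hinnerj j) (hpnn i j _ hyv)
                  _ = (∑ j ∈ Finset.univ.filter (fun j => j ≠ i), pMat lam i j (y+v))
                      * (m' * (C * ((1+s) * v^(-(1/2):ℝ)))) := (Finset.sum_mul _ _ _).symm
                  _ ≤ 1 * (m' * (C * ((1+s) * v^(-(1/2):ℝ)))) :=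
                      mul_le_mul_of_nonneg_right hsum1 hU0
                  _ = m' * (C * ((1+s) * v^(-(1/2):ℝ))) := one_mul _
              have hEH0 : 0 ≤ Real.exp (-(r i * v)) *
                  (fdens lam i (y+v)/(1 - Fcdf lam i y)) :=
                mul_nonneg (Real.exp_pos _).le hh0
              have hEHc : Real.exp (-(r i * v)) *
                  (fdens lam i (y+v)/(1 - Fcdf lam i y)) ≤ c := by
                calc Real.exp (-(r i * v)) * (fdens lam i (y+v)/(1 - Fcdf lam i y))
                    ≤ 1 * c := mul_le_mul hexple hhle hh0 zero_le_one
                  _ = c := one_mul c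
              calc -g v = (Real.exp (-(r i * v)) * (fdens lam i (y+v)/(1-Fcdf lam i y))) *
                    (-(∑ j ∈ Finset.univ.filter (fun j => j ≠ i), pMat lam i j (y+v) *
                    ∫ x in Set.Ioi (0:ℝ), φ (t+v) x j 0 * alphaDens r σ x t s i v)) := by
                    simp only [hgdef]
                    ring
                _ ≤ (Real.exp (-(r i * v)) * (fdens lam i (y+v)/(1-Fcdf lam i y))) *
                    (m' * (C * ((1+s) * v^(-(1/2):ℝ)))) :=
                    mul_le_mul_of_nonneg_left hSbound hEH0
                _ ≤ c * (m' * (C * ((1+s) * v^(-(1/2):ℝ)))) :=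
                    mul_le_mul_of_nonneg_right hEHc hU0
                _ = D * v^(-(1/2):ℝ) := by
                    rw [hDdef]
                    ring
                _ = Bf v := hBfv.symm
            · -- induction-region branch
              push_neg at hvw
              have hBfv : Bf v = 0 := by
                rw [hBdef]
                exact Set.indicator_of_notMem (fun hmem2 => absurd hmem2.2 (not_lt.mpr hvw)) _
              have hg0 : 0 ≤ g v := by
                simp only [hgdef]
                apply mul_nonneg (mul_nonneg (Real.exp_pos _).le hh0)
                apply Finset.sum_nonneg
                intro j hj
                apply mul_nonneg (hpnn i j _ hyv)
                apply setIntegral_nonneg measurableSet_Ioi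
                intro x hx
                have hx0 : (0:ℝ) < x := hx
                apply mul_nonneg
                · apply hP (t+v) x 0
                    (memDbar_mk (by linarith) (by linarith) hx0.le le_rfl (by linarith))
                    (by rw [hwdef] at hvw; linarith) j hx0
                · apply div_nonneg (Real.exp_pos _).le
                  apply mul_nonneg (mul_nonneg hπ0.le hx0.le)
                  exact Real.sqrt_nonneg _
              rw [hBfv]
              linarith
        have hneg : -φ t s i y ≤ ∫ v in (0:ℝ)..(T-t), Bf v := by
          have hIbound : -(∫ v in (0:ℝ)..(T-t), g v) ≤ ∫ v in (0:ℝ)..(T-t), Bf v := by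
            by_cases hgi : IntervalIntegrable g volume 0 (T-t)
            · rw [← intervalIntegral.integral_neg]
              exact intervalIntegral.integral_mono_on hTt0 hgi.neg hBint hgB
            · rw [intervalIntegral.integral_undef hgi, neg_zero]
              exact intervalIntegral.integral_nonneg hTt0 (fun v _ => hB0 v)
          have : φ t s i y = (1 - Fcdf lam i (T - t + y)) / (1 - Fcdf lam i y) * ρ i t s
              + ∫ v in (0:ℝ)..(T - t), g v := hAop
          linarith
        have hBval : (∫ v in (0:ℝ)..(T-t), Bf v) ≤ D * (2 * Real.sqrt δ) := by
          rw [intervalIntegral.integral_of_le hTt0, hBdef,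
            setIntegral_indicator measurableSet_Ioo]
          have hsub2 : Set.Ioc (0:ℝ) (T-t) ∩ Set.Ioo 0 w ⊆ Set.Ioc 0 δ := by
            rintro v ⟨hv1, hv2⟩
            exact ⟨hv2.1, by linarith [hv2.2, hwδ]⟩
          have hint3 : IntegrableOn (fun v : ℝ => D * v^(-(1/2):ℝ)) (Set.Ioc 0 δ) := by
            have h6 := (intervalIntegral.intervalIntegrable_rpow' (r := -(1/2)) (by norm_num)
              (a := 0) (b := δ)).const_mul D
            rwa [intervalIntegrable_iff_integrableOn_Ioc_of_le hδ0.le] at h6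
          have hae : 0 ≤ᵐ[volume.restrict (Set.Ioc 0 δ)] fun v : ℝ => D * v^(-(1/2):ℝ) := by
            have hae2 : ∀ᵐ v ∂(volume.restrict (Set.Ioc (0:ℝ) δ)), 0 ≤ D * v^(-(1/2):ℝ) := by
              rw [ae_restrict_iff' measurableSet_Ioc]
              apply ae_of_all
              intro v hv
              exact mul_nonneg hD0.le (Real.rpow_nonneg hv.1.le _)
            exact hae2
          have hmono := setIntegral_mono_set hint3 hae
            (HasSubset.Subset.eventuallyLE hsub2)
          refine hmono.trans ?_
          have hval : (∫ v in (0:ℝ)..δ, v^(-(1/2):ℝ)) = 2 * Real.sqrt δ := by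
            rw [integral_rpow (Or.inl (by norm_num))]
            rw [Real.zero_rpow (by norm_num), Real.sqrt_eq_rpow]
            norm_num
            ring
          rw [← intervalIntegral.integral_of_le hδ0.le, intervalIntegral.integral_const_mul,
            hval]
        have hfinal : D * (2 * Real.sqrt δ) = m'/4 * (1+s) := by
          rw [hsqδ, hDdef]
          field_simp
          ring
        linarith
      have hle := Real.sSup_le hkey (by linarith)
      rw [← hm'def] at hle
      exfalso
      linarith
  -- base case at t = T
  have hbase : ∀ t s y, memDbar T t s y → T ≤ t → ∀ i, 0 < s → 0 ≤ φ t s i y := by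
    intro t s y hmem ht i hs
    obtain ⟨htI, hsI, hyI⟩ := hmem
    have htt : t = T := le_antisymm htI.2 ht
    rw [hIE t s y ⟨htI, hsI, hyI⟩ i]
    show (0:ℝ) ≤ Aop lam r σ ρ T φ t s i y
    unfold Aop
    rw [show T - t = 0 by rw [htt]; ring, intervalIntegral.integral_same, add_zero]
    apply mul_nonneg
    · rw [h1F, h1F]
      positivity
    · exact (hρ i).2.1 t htI s hsI
  -- backward induction
  have hind : ∀ n : ℕ, ∀ t s y, memDbar T t s y → T - n*δ ≤ t → ∀ i, 0 < s → 0 ≤ φ t s i y := by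
    intro n
    induction n with
    | zero =>
        intro t s y hmem ht i hs
        apply hbase t s y hmem (by simpa using ht) i hs
    | succ n ih =>
        intro t s y hmem ht i hs
        apply hstep (T - n*δ) ih t s y hmem ?_ i hs
        have hcast : ((n+1 : ℕ) : ℝ) = (n : ℝ) + 1 := by push_cast; ring
        rw [hcast] at ht
        linarith
  obtain ⟨n, hn⟩ := exists_nat_ge (T/δ)
  have hcover : ∀ t s y, memDbar T t s y → ∀ i, 0 < s → 0 ≤ φ t s i y := by
    intro t s y hmem i hs
    apply hind n t s y hmem ?_ i hs
    have h7 : T ≤ n * δ := by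
      rw [div_le_iff₀ hδ0] at hn
      linarith
    have : (0:ℝ) ≤ t := hmem.1.1
    linarith
  -- extend to s = 0 by continuity
  intro t s y hmem i
  rcases lt_or_eq_of_le (Set.mem_Ici.mp hmem.2.1) with hs | hs
  · exact hcover t s y hmem i hs
  · subst hs
    have hmem' : ((t, (0:ℝ), y) : ℝ × ℝ × ℝ) ∈
        {p : ℝ × ℝ × ℝ | memDbar T p.1 p.2.1 p.2.2} := hmem
    have hcw := hφcont i _ hmem'
    have hmap : Tendsto (fun u : ℝ => ((t, u, y) : ℝ × ℝ × ℝ))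
        (nhdsWithin 0 (Set.Ioi 0))
        (nhdsWithin (t, 0, y) {p : ℝ × ℝ × ℝ | memDbar T p.1 p.2.1 p.2.2}) := by
      rw [tendsto_nhdsWithin_iff]
      constructor
      · exact ((continuous_const.prodMk (continuous_id.prodMk continuous_const)).tendsto
          (0:ℝ)).mono_left nhdsWithin_le_nhds
      · apply eventually_mem_nhdsWithin.mono
        intro u hu
        exact ⟨hmem.1, Set.mem_Ici.mpr (le_of_lt (Set.mem_Ioi.mp hu)), hmem.2.2⟩
    have htend : Tendsto (fun u : ℝ => φ t u i y) (nhdsWithin 0 (Set.Ioi 0))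
        (nhds (φ t 0 i y)) := hcw.tendsto.comp hmap
    apply ge_of_tendsto htend
    apply eventually_mem_nhdsWithin.mono
    intro u hu
    exact hcover t u y ⟨hmem.1, Set.mem_Ici.mpr (le_of_lt (Set.mem_Ioi.mp hu)), hmem.2.2⟩ i hu
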